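/- Let V be a finite-dimensional vector space over ℂ with a nondegenerate symmetric bilinear form b, let n = dim V, and let s be a positive integer with s ≤ n. Then the tensors T_M ∈ V^{⊗2s}, where M ranges over all perfect matchings of {1,…,2s}, are linearly independent over ℂ. -/

import Mathlib

open scoped TensorProduct

/-- A perfect matching of `{1,…,m}`, encoded as a fixed-point-free involution of `Fin m`:
the blocks of the matching are the pairs `{i, σ i}`. -/
abbrev PerfectMatching (m : ℕ) : Type :=
  {σ : Equiv.Perm (Fin m) // ∀ i, σ (σ i) = i ∧ σ i ≠ i}

/-- The tensor `T_M ∈ V^{⊗2s}` attached to a perfect matching `M` (given as a fixed-point-free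
involution `σ` of `Fin (2*s)`): a copy of the Casimir element `t = ∑ₖ eₖ ⊗ fₖ` of the bilinear
form (where `(eₖ)`, `(fₖ)` are dual bases) is placed in the pair of slots `{i, σ i}` for each
block of `M`, the factor `e` going to the smaller slot and `f` to the larger one. -/
noncomputable def matchingTensor {V : Type*} [AddCommGroup V] [Module ℂ V]
    {ι : Type*} [Fintype ι] [DecidableEq ι] (e f : ι → V) {s : ℕ}
    (σ : Equiv.Perm (Fin (2 * s))) : ⨂[ℂ] _ : Fin (2 * s), V :=
  ∑ h : Fin (2 * s) → ι,
    if h ∘ ⇑σ = h then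
      PiTensorProduct.tprod ℂ (fun i => if i < σ i then e (h i) else f (h i))
    else 0

section AuxMatching

open Finset

variable {s : ℕ}

/-- The set of lower ends of blocks of a fixed-point-free involution. -/
def MTAux.lowerSet (σ : Equiv.Perm (Fin (2 * s))) : Finset (Fin (2 * s)) :=
  Finset.univ.filter fun i => i < σ i

namespace MTAux

lemma mem_lowerSet {σ : Equiv.Perm (Fin (2 * s))} {i : Fin (2 * s)} :
    i ∈ lowerSet σ ↔ i < σ i := by simp [lowerSet]

lemma lowerSet_or (σ : Equiv.Perm (Fin (2 * s)))
    (hσ : ∀ i, σ (σ i) = i ∧ σ i ≠ i) (i : Fin (2 * s)) :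
    i ∈ lowerSet σ ∨ σ i ∈ lowerSet σ := by
  rcases lt_or_gt_of_ne (fun h : (i : Fin (2*s)) = σ i => (hσ i).2 h.symm) with h | h
  · exact Or.inl (mem_lowerSet.2 h)
  · right; rw [mem_lowerSet, (hσ i).1]; exact h

lemma prod_split {M : Type*} [CommMonoid M] (σ : Equiv.Perm (Fin (2 * s)))
    (hσ : ∀ i, σ (σ i) = i ∧ σ i ≠ i) (g : Fin (2 * s) → M) :
    ∏ i, g i = ∏ i ∈ lowerSet σ, (g i * g (σ i)) := by
  have hcompl : Finset.univ.filter (fun i => ¬ i < σ i) = (lowerSet σ).image σ := by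
    ext i
    simp only [mem_filter, mem_univ, true_and, mem_image, mem_lowerSet]
    constructor
    · intro h
      refine ⟨σ i, ?_, (hσ i).1⟩
      rw [(hσ i).1]
      exact lt_of_le_of_ne (not_lt.1 h) fun hh => (hσ i).2 hh
    · rintro ⟨j, hj, rfl⟩
      rw [(hσ j).1]
      exact not_lt.2 hj.le
  have hinj : Set.InjOn σ (lowerSet σ) := fun a _ b _ h => σ.injective h
  calc ∏ i, g i
      = (∏ i ∈ lowerSet σ, g i) * ∏ i ∈ Finset.univ.filter (fun i => ¬ i < σ i), g i := by
        rw [lowerSet, prod_filter_mul_prod_filter_not]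
    _ = (∏ i ∈ lowerSet σ, g i) * ∏ i ∈ lowerSet σ, g (σ i) := by
        rw [hcompl, prod_image hinj]
    _ = ∏ i ∈ lowerSet σ, (g i * g (σ i)) := (prod_mul_distrib).symm

lemma card_lowerSet (σ : Equiv.Perm (Fin (2 * s)))
    (hσ : ∀ i, σ (σ i) = i ∧ σ i ≠ i) : (lowerSet σ).card = s := by
  have h2 : (2 * s) = (lowerSet σ).card * 2 := by
    have := prod_split (M := Multiplicative ℕ) σ hσ (fun _ => Multiplicative.ofAdd 1)
    have := congrArg Multiplicative.toAdd this
    simpa using this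
  omega

lemma sum_prod_inv {ι : Type*} [Fintype ι] [DecidableEq ι] (σ : Equiv.Perm (Fin (2 * s)))
    (hσ : ∀ i, σ (σ i) = i ∧ σ i ≠ i) (Q : Fin (2 * s) → ι → ℂ) :
    ∑ h ∈ Finset.univ.filter (fun h : Fin (2 * s) → ι => h ∘ σ = h),
        ∏ i ∈ lowerSet σ, Q i (h i)
      = ∏ i ∈ lowerSet σ, ∑ k, Q i k := by
  classical
  have hrhs : ∏ i ∈ lowerSet σ, ∑ k, Q i k
      = ∑ p : {x // x ∈ lowerSet σ} → ι, ∏ i : {x // x ∈ lowerSet σ}, Q i.1 (p i) := by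
    rw [← Finset.prod_coe_sort (lowerSet σ) (fun i => ∑ k, Q i k), Finset.prod_univ_sum]
    simp [Fintype.piFinset_univ]
  rw [hrhs]
  refine Finset.sum_nbij' (fun h => fun i : {x // x ∈ lowerSet σ} => h i.1)
    (fun p => fun i => if hlt : i < σ i then p ⟨i, mem_lowerSet.2 hlt⟩
      else p ⟨σ i, (lowerSet_or σ hσ i).resolve_left (fun hm => hlt (mem_lowerSet.1 hm))⟩)
    (fun h hh => mem_univ _) ?_ ?_ ?_ ?_
  · intro p _
    simp only [mem_filter, mem_univ, true_and]
    funext i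
    by_cases hlt : i < σ i
    · have h1 : ¬ (σ i < σ (σ i)) := by rw [(hσ i).1]; exact asymm hlt
      simp only [Function.comp_apply, dif_neg h1, dif_pos hlt]
      exact congrArg p (Subtype.ext (hσ i).1)
    · have h2 : σ i < σ (σ i) := by
        rw [(hσ i).1]
        exact lt_of_le_of_ne (not_lt.1 hlt) fun hh => (hσ i).2 hh
      simp only [Function.comp_apply, dif_pos h2, dif_neg hlt]
  · intro h hh
    have hinv : h ∘ σ = h := (mem_filter.1 hh).2
    funext i
    by_cases hlt : i < σ i
    · simp [dif_pos hlt]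
    · simp only [dif_neg hlt]
      exact congrFun hinv i
  · intro p _
    funext i
    rcases i with ⟨i, hi⟩
    simp [dif_pos (mem_lowerSet.1 hi)]
  · intro h hh
    rw [← Finset.prod_coe_sort (lowerSet σ) (fun i => Q i (h i))]

variable {V : Type*} [AddCommGroup V] [Module ℂ V]
variable {ι : Type*} [Fintype ι] [DecidableEq ι]

lemma casimir (B : LinearMap.BilinForm ℂ V) (e f : Module.Basis ι ℂ V)
    (hdual : ∀ k l, B (e k) (f l) = if k = l then 1 else 0) (x z : V) :
    ∑ k, B (e k) x * B (f k) z = B x z := by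
  have hrep : ∀ k, f.repr x k = B (e k) x := by
    intro k
    conv_rhs => rw [← f.sum_repr x]
    simp [-Module.Basis.sum_repr, hdual, Finset.mul_sum, mul_ite]
  conv_rhs => rw [← f.sum_repr x]
  simp [hrep, mul_comm]

/-- The pairing functional `x ↦ ∏ i, B (x i) (y i)` on the tensor power. -/
noncomputable def pairFun (B : LinearMap.BilinForm ℂ V) (y : Fin (2 * s) → V) :
    (⨂[ℂ] _ : Fin (2 * s), V) →ₗ[ℂ] ℂ :=
  PiTensorProduct.lift ((MultilinearMap.mkPiAlgebra ℂ (Fin (2 * s)) ℂ).compLinearMap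
    (fun i => B.flip (y i)))

lemma pairFun_tprod (B : LinearMap.BilinForm ℂ V) (y x : Fin (2 * s) → V) :
    pairFun B y (PiTensorProduct.tprod ℂ x) = ∏ i, B (x i) (y i) := by
  simp [pairFun]

lemma pairFun_matchingTensor (B : LinearMap.BilinForm ℂ V) (e f : Module.Basis ι ℂ V)
    (hdual : ∀ k l, B (e k) (f l) = if k = l then 1 else 0)
    (σ : Equiv.Perm (Fin (2 * s))) (hσ : ∀ i, σ (σ i) = i ∧ σ i ≠ i)
    (y : Fin (2 * s) → V) :
    pairFun B y (matchingTensor (⇑e) (⇑f) σ) = ∏ i ∈ lowerSet σ, B (y i) (y (σ i)) := by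
  classical
  rw [matchingTensor, map_sum]
  have step1 : ∀ h : Fin (2 * s) → ι,
      pairFun B y (if h ∘ ⇑σ = h then
          PiTensorProduct.tprod ℂ (fun i => if i < σ i then e (h i) else f (h i)) else 0)
        = if h ∘ ⇑σ = h then
            ∏ i, B (if i < σ i then e (h i) else f (h i)) (y i) else 0 := by
    intro h
    split
    · rw [pairFun_tprod]
    · rw [map_zero]
  rw [Finset.sum_congr rfl (fun h _ => step1 h), ← Finset.sum_filter]
  have step2 : ∀ h ∈ Finset.univ.filter (fun h : Fin (2 * s) → ι => h ∘ σ = h),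
      ∏ i, B (if i < σ i then e (h i) else f (h i)) (y i)
        = ∏ i ∈ lowerSet σ, (B (e (h i)) (y i) * B (f (h i)) (y (σ i))) := by
    intro h hh
    have hinv : h ∘ σ = h := (mem_filter.1 hh).2
    rw [prod_split σ hσ]
    refine Finset.prod_congr rfl fun i hi => ?_
    have hlt : i < σ i := mem_lowerSet.1 hi
    have h1 : ¬ (σ i < σ (σ i)) := by rw [(hσ i).1]; exact asymm hlt
    rw [if_pos hlt, if_neg h1]
    have : h (σ i) = h i := congrFun hinv i
    rw [this]
  rw [Finset.sum_congr rfl step2,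
    sum_prod_inv σ hσ (fun i k => B (e k) (y i) * B (f k) (y (σ i)))]
  exact Finset.prod_congr rfl fun i _ => casimir B e f hdual (y i) (y (σ i))

end MTAux

end AuxMatching

/-- Let `V` be a finite-dimensional vector space over `ℂ` with a nondegenerate symmetric
bilinear form `b`, let `n = dim V`, and let `s` be a positive integer with `s ≤ n`. Then the
tensors `T_M ∈ V^{⊗2s}`, where `M` ranges over all perfect matchings of `{1,…,2s}`, are
linearly independent over `ℂ`. -/
theorem matchingTensors_linearIndependent
    {V : Type*} [AddCommGroup V] [Module ℂ V] [FiniteDimensional ℂ V]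
    (B : LinearMap.BilinForm ℂ V)
    (hBsymm : ∀ x y, B x y = B y x)
    (hBnd : B.Nondegenerate)
    {ι : Type*} [Fintype ι] [DecidableEq ι]
    (e f : Module.Basis ι ℂ V)
    (hdual : ∀ k l, B (e k) (f l) = if k = l then 1 else 0)
    (s : ℕ) (hs : 0 < s) (hsn : s ≤ Module.finrank ℂ V) :
    LinearIndependent ℂ
      (fun M : PerfectMatching (2 * s) => matchingTensor (⇑e) (⇑f) M.1) := by
  classical
  -- Construct an orthonormal family for `B`.
  haveI : Invertible (2 : ℂ) := invertibleOfNonzero two_ne_zero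
  have hsym : B.IsSymm := LinearMap.BilinForm.isSymm_def.2 fun x y => hBsymm x y
  obtain ⟨v, hv⟩ := LinearMap.BilinForm.exists_orthogonal_basis (LinearMap.BilinForm.isSymm_iff.1 hsym)
  have hvd : ∀ i, B (v i) (v i) ≠ 0 := fun i =>
    LinearMap.BilinForm.iIsOrtho.not_isOrtho_basis_self_of_nondegenerate hv hBnd i
  have hzex : ∀ i : Fin (Module.finrank ℂ V), ∃ z : ℂ, z ^ 2 = B (v i) (v i) := fun i =>
    IsAlgClosed.exists_pow_nat_eq _ two_pos
  choose z hzz using hzex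
  have hz0 : ∀ i, z i ≠ 0 := fun i h => hvd i (by rw [← hzz i, h]; ring)
  set w : Fin (Module.finrank ℂ V) → V := fun i => (z i)⁻¹ • v i with hwdef
  have hww : ∀ a b, B (w a) (w b) = if a = b then 1 else 0 := by
    intro a b
    simp only [hwdef, map_smul, LinearMap.smul_apply, smul_eq_mul]
    by_cases hab : a = b
    · subst hab
      rw [if_pos rfl, ← hzz a, sq]
      field_simp
      exact div_self (hz0 a)
    · rw [if_neg hab, show B (v a) (v b) = 0 from hv hab, mul_zero, mul_zero]
  rw [linearIndependent_iff']
  intro t g hsum τ hτ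
  -- Label the blocks of `τ` by distinct indices.
  have hcard : Fintype.card {x // x ∈ MTAux.lowerSet τ.1}
      ≤ Fintype.card (Fin (Module.finrank ℂ V)) := by
    rw [Fintype.card_coe, MTAux.card_lowerSet τ.1 τ.2, Fintype.card_fin]
    exact hsn
  obtain ⟨emb⟩ := Function.Embedding.nonempty_of_card_le hcard
  set a : Fin (2 * s) → Fin (Module.finrank ℂ V) := fun i =>
    if hlt : i < τ.1 i then emb ⟨i, MTAux.mem_lowerSet.2 hlt⟩
    else emb ⟨τ.1 i, (MTAux.lowerSet_or τ.1 τ.2 i).resolve_left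
      (fun hm => hlt (MTAux.mem_lowerSet.1 hm))⟩ with ha
  have p1 : ∀ i, a (τ.1 i) = a i := by
    intro i
    by_cases hlt : i < τ.1 i
    · have h1 : ¬ τ.1 i < τ.1 (τ.1 i) := by rw [(τ.2 i).1]; exact asymm hlt
      simp only [ha, dif_neg h1, dif_pos hlt]
      exact congrArg emb (Subtype.ext (τ.2 i).1)
    · have h2 : τ.1 i < τ.1 (τ.1 i) := by
        rw [(τ.2 i).1]
        exact lt_of_le_of_ne (not_lt.1 hlt) fun hh => (τ.2 i).2 hh
      simp only [ha, dif_pos h2, dif_neg hlt]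
  have p2 : ∀ i j, a i = a j → j = i ∨ j = τ.1 i := by
    intro i j hij
    by_cases hi : i < τ.1 i <;> by_cases hj : j < τ.1 j
    · rw [ha] at hij
      simp only [dif_pos hi, dif_pos hj] at hij
      have hvals : i = j := Subtype.ext_iff.1 (emb.injective hij)
      exact Or.inl hvals.symm
    · rw [ha] at hij
      simp only [dif_pos hi, dif_neg hj] at hij
      have hvals : i = τ.1 j := Subtype.ext_iff.1 (emb.injective hij)
      right
      rw [hvals, (τ.2 j).1]
    · rw [ha] at hij
      simp only [dif_neg hi, dif_pos hj] at hij
      have hvals : τ.1 i = j := Subtype.ext_iff.1 (emb.injective hij)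
      exact Or.inr hvals.symm
    · rw [ha] at hij
      simp only [dif_neg hi, dif_neg hj] at hij
      have hvals : τ.1 i = τ.1 j := Subtype.ext_iff.1 (emb.injective hij)
      exact Or.inl (τ.1.injective hvals).symm
  -- Evaluate the pairing functional on each matching tensor.
  have heval : ∀ M ∈ t, MTAux.pairFun B (fun i => w (a i)) (matchingTensor (⇑e) (⇑f) M.1)
      = if M = τ then 1 else 0 := by
    intro M _
    rw [MTAux.pairFun_matchingTensor B e f hdual M.1 M.2]
    have hstep : ∀ i ∈ MTAux.lowerSet M.1,
        B (w (a i)) (w (a (M.1 i))) = if a i = a (M.1 i) then (1 : ℂ) else 0 :=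
      fun i _ => hww _ _
    rw [Finset.prod_congr rfl hstep, Finset.prod_boole]
    have hiff : (∀ i ∈ MTAux.lowerSet M.1, a i = a (M.1 i)) ↔ M = τ := by
      constructor
      · intro hall
        refine Subtype.ext (Equiv.ext fun i => ?_)
        rcases MTAux.lowerSet_or M.1 M.2 i with hi | hi
        · rcases p2 i (M.1 i) (hall i hi) with h | h
          · exact absurd h (M.2 i).2
          · rw [h]
        · have h2 := hall _ hi
          rw [(M.2 i).1] at h2
          rcases p2 (M.1 i) i h2 with h | h
          · exact absurd h.symm (M.2 i).2
          · have h3 := congrArg τ.1 h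
            rw [(τ.2 (M.1 i)).1] at h3
            exact h3.symm
      · rintro rfl i _
        exact (p1 i).symm
    simp [hiff]
  -- Conclude.
  have happ : ∑ M ∈ t, g M * (if M = τ then 1 else 0) = 0 := by
    have h0 := congrArg (MTAux.pairFun B (fun i => w (a i))) hsum
    rw [map_sum, map_zero] at h0
    have h1 : ∑ M ∈ t, (MTAux.pairFun B (fun i => w (a i))) (g M • matchingTensor (⇑e) (⇑f) M.1)
        = ∑ M ∈ t, g M * (if M = τ then 1 else 0) :=
      Finset.sum_congr rfl fun M hM => by rw [map_smul, heval M hM, smul_eq_mul]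
    rw [h1] at h0
    exact h0
  simpa [mul_ite, hτ] using happ
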